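/- Let x* > 0, let I be a closed interval of positive reals with x* ∈ I, and let F : I → ℝ be continuous. Suppose that for all x₁, x₂, x₃ ∈ I with x₁·x₂ = x₃·x* it holds that F(x₁) + F(x₂) = F(x₃) + F(x*). Then there exists K ∈ ℝ such that F(x) = K·log(x/x*) + F(x*) for all x ∈ I. -/

import Mathlib

lemma cauchy_lin (b : ℝ) (hb : 0 < b) (H : ℝ → ℝ)
    (hc : ContinuousOn H (Set.Icc 0 b))
    (hadd : ∀ s t : ℝ, 0 ≤ s → 0 ≤ t → s + t ≤ b → H s + H t = H (s + t)) :
    ∀ t ∈ Set.Icc 0 b, H t = t / b * H b := by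
  have h0 : H 0 = 0 := by
    have := hadd 0 0 le_rfl le_rfl (by linarith)
    simpa using this.symm
  have hmul : ∀ (m : ℕ) (u : ℝ), 0 ≤ u → (m : ℝ) * u ≤ b → H ((m : ℝ) * u) = m * H u := by
    intro m
    induction m with
    | zero => intro u hu _; simpa using h0
    | succ n ih =>
      intro u hu hle
      have hle' : (n : ℝ) * u + u ≤ b := by push_cast at hle; linarith
      have hnu : (n : ℝ) * u ≤ b := by nlinarith
      have h1 := hadd ((n : ℝ) * u) u (by positivity) hu hle'
      have h2 := ih u hu hnu
      push_cast
      rw [show ((n : ℝ) + 1) * u = (n : ℝ) * u + u by ring, ← h1, h2]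
      ring
  have hrat : ∀ q : ℚ, 0 ≤ q → q ≤ 1 → H ((q : ℝ) * b) = (q : ℝ) * H b := by
    intro q hq hq1
    have hn : 0 < (q.den : ℝ) := by exact_mod_cast q.pos
    have hk : ((q.num.toNat : ℤ) : ℝ) = (q.num : ℝ) := by
      exact_mod_cast congrArg (Int.cast : ℤ → ℝ) (Int.toNat_of_nonneg (Rat.num_nonneg.mpr hq))
    have hq' : (q : ℝ) = (q.num.toNat : ℝ) / (q.den : ℝ) := by
      rw [Rat.cast_def]; push_cast at hk ⊢; rw [hk]
    have hu : (0 : ℝ) ≤ b / q.den := by positivity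
    have hb1 : (q.den : ℝ) * (b / q.den) = b := by field_simp
    have h1 : H b = q.den * H (b / q.den) := by
      have := hmul q.den (b / q.den) hu (le_of_eq hb1)
      rwa [hb1] at this
    have hq1' : (q.num.toNat : ℝ) ≤ (q.den : ℝ) := by
      have : (q : ℝ) ≤ 1 := by exact_mod_cast hq1
      rw [hq'] at this
      rw [div_le_one hn] at this
      linarith
    have h2 : H ((q.num.toNat : ℝ) * (b / q.den)) = q.num.toNat * H (b / q.den) := by
      apply hmul _ _ hu
      calc (q.num.toNat : ℝ) * (b / q.den) ≤ (q.den : ℝ) * (b / q.den) := by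
            apply mul_le_mul_of_nonneg_right hq1' hu
        _ = b := hb1
    have heq : (q : ℝ) * b = (q.num.toNat : ℝ) * (b / q.den) := by
      rw [hq']; field_simp
    rw [heq, h2, h1, hq']
    field_simp
  -- clamp function
  set c : ℝ → ℝ := fun r => min (max r 0) 1 with hc_def
  have hc01 : ∀ r, 0 ≤ c r ∧ c r ≤ 1 := fun r => ⟨le_min (le_max_right r 0) zero_le_one, min_le_right _ _⟩
  have hccont : Continuous c := (continuous_id.max continuous_const).min continuous_const
  have hmaps : ∀ r : ℝ, c r * b ∈ Set.Icc 0 b := by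
    intro r
    constructor
    · exact mul_nonneg (hc01 r).1 hb.le
    · calc c r * b ≤ 1 * b := mul_le_mul_of_nonneg_right (hc01 r).2 hb.le
        _ = b := one_mul b
  set φ : ℝ → ℝ := fun r => H (c r * b) - c r * H b with hφ_def
  have hφcont : Continuous φ := by
    apply Continuous.sub
    · exact hc.comp_continuous (hccont.mul continuous_const) hmaps
    · exact hccont.mul continuous_const
  have hφrat : ∀ q : ℚ, φ (q : ℝ) = 0 := by
    intro q
    have hcq : c (q : ℝ) = ((min (max q 0) 1 : ℚ) : ℝ) := by
      simp only [hc_def]; push_cast; ring_nf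
    have := hrat (min (max q 0) 1) (le_min (le_max_right q 0) zero_le_one) (min_le_right _ _)
    simp only [hφ_def, hcq, this]
    ring
  have hφzero : φ = fun _ => 0 := by
    apply Rat.denseRange_cast.equalizer hφcont continuous_const
    funext q
    exact hφrat q
  intro t ht
  have hr : c (t / b) = t / b := by
    simp only [hc_def]
    rw [max_eq_left (div_nonneg ht.1 hb.le), min_eq_left (by
      rw [div_le_one hb]; exact ht.2)]
  have := congrFun hφzero (t / b)
  simp only [hφ_def, hr] at this
  rw [div_mul_cancel₀ t hb.ne'] at this
  linarith

/-- Let x* > 0, let I be a closed interval of positive reals with x* ∈ I, and let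
F : I → ℝ be continuous. Suppose that for all x₁, x₂, x₃ ∈ I with x₁·x₂ = x₃·x* it holds that
F(x₁) + F(x₂) = F(x₃) + F(x*). Then there exists K ∈ ℝ such that
F(x) = K·log(x/x*) + F(x*) for all x ∈ I. -/
theorem stmt_5 (xstar lo hi : ℝ) (hxstar : 0 < xstar) (hlo : 0 < lo)
    (hmem : xstar ∈ Set.Icc lo hi)
    (F : ℝ → ℝ) (hF : ContinuousOn F (Set.Icc lo hi))
    (hfun : ∀ x₁ ∈ Set.Icc lo hi, ∀ x₂ ∈ Set.Icc lo hi, ∀ x₃ ∈ Set.Icc lo hi,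
      x₁ * x₂ = x₃ * xstar → F x₁ + F x₂ = F x₃ + F xstar) :
    ∃ K : ℝ, ∀ x ∈ Set.Icc lo hi, F x = K * Real.log (x / xstar) + F xstar := by
  obtain ⟨hlox, hxhi⟩ := hmem
  have hhi : 0 < hi := lt_of_lt_of_le hxstar hxhi
  set a : ℝ := Real.log (lo / xstar) with ha_def
  set b : ℝ := Real.log (hi / xstar) with hb_def
  have ha0 : a ≤ 0 := Real.log_nonpos (by positivity) (by rw [div_le_one hxstar]; exact hlox)
  have hb0 : 0 ≤ b := Real.log_nonneg (by rw [le_div_iff₀ hxstar]; linarith)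
  have hexpa : Real.exp a = lo / xstar := Real.exp_log (by positivity)
  have hexpb : Real.exp b = hi / xstar := Real.exp_log (by positivity)
  set H : ℝ → ℝ := fun t => F (xstar * Real.exp t) - F xstar with hH_def
  have hmaps : ∀ t ∈ Set.Icc a b, xstar * Real.exp t ∈ Set.Icc lo hi := by
    intro t ht
    constructor
    · have : lo / xstar ≤ Real.exp t := by rw [← hexpa]; exact Real.exp_le_exp.mpr ht.1
      calc lo = xstar * (lo / xstar) := by field_simp
        _ ≤ xstar * Real.exp t := by nlinarith
    · have : Real.exp t ≤ hi / xstar := by rw [← hexpb]; exact Real.exp_le_exp.mpr ht.2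
      calc xstar * Real.exp t ≤ xstar * (hi / xstar) := by nlinarith
        _ = hi := by field_simp
  have hH0 : H 0 = 0 := by simp [hH_def]
  have hHadd : ∀ s t : ℝ, s ∈ Set.Icc a b → t ∈ Set.Icc a b → s + t ∈ Set.Icc a b →
      H s + H t = H (s + t) := by
    intro s t hs ht hst
    have key := hfun _ (hmaps s hs) _ (hmaps t ht) _ (hmaps _ hst)
      (by rw [Real.exp_add]; ring)
    simp only [hH_def]
    linarith
  have hHcont : ContinuousOn H (Set.Icc a b) := by
    apply ContinuousOn.sub _ continuousOn_const
    exact hF.comp ((continuous_const.mul Real.continuous_exp).continuousOn)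
      (fun t ht => hmaps t ht)
  have hsub_pos : Set.Icc (0:ℝ) b ⊆ Set.Icc a b := Set.Icc_subset_Icc ha0 le_rfl
  have hsub_neg : ∀ t : ℝ, 0 ≤ t → t ≤ -a → -t ∈ Set.Icc a b := by
    intro t h1 h2; constructor <;> linarith
  -- positive side
  have hpos : 0 < b → ∀ t ∈ Set.Icc (0:ℝ) b, H t = t / b * H b := by
    intro hbpos
    apply cauchy_lin b hbpos H (hHcont.mono hsub_pos)
    intro s t hs ht hst
    exact hHadd s t (hsub_pos ⟨hs, by linarith⟩) (hsub_pos ⟨ht, by linarith⟩)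
      (hsub_pos ⟨by linarith, hst⟩)
  -- negative side
  have hneg : a < 0 → ∀ t : ℝ, a ≤ t → t ≤ 0 → H t = t / a * H a := by
    intro hapos t ht1 ht2
    have key := cauchy_lin (-a) (by linarith) (fun u => H (-u))
      (by
        apply hHcont.comp continuous_neg.continuousOn
        intro u hu
        exact hsub_neg u hu.1 hu.2)
      (by
        intro s t hs ht hst
        have hm : -s + -t ∈ Set.Icc a b := by
          rw [show -s + -t = -(s+t) by ring]; exact hsub_neg (s+t) (by linarith) hst
        have h := hHadd (-s) (-t) (hsub_neg s hs (by linarith)) (hsub_neg t ht (by linarith)) hm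
        show H (-s) + H (-t) = H (-(s+t))
        rw [show -(s+t) = -s + -t by ring]
        exact h)
      (-t) ⟨by linarith, by linarith⟩
    simp only [neg_neg] at key
    rw [key]
    have ha' : a ≠ 0 := ne_of_lt hapos
    field_simp
  -- choose K
  by_cases hbpos : 0 < b
  · refine ⟨H b / b, ?_⟩
    have hslope : a < 0 → H a / a = H b / b := by
      intro hapos
      set δ : ℝ := min b (-a) with hδ_def
      have hδpos : 0 < δ := lt_min hbpos (by linarith)
      have h1 : H δ = δ / b * H b := hpos hbpos δ ⟨hδpos.le, min_le_left _ _⟩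
      have h2 : H (-δ) = (-δ) / a * H a := hneg hapos (-δ) (by
        have := min_le_right b (-a); linarith) (by linarith)
      have h3 : H δ + H (-δ) = 0 := by
        have := hHadd δ (-δ) (hsub_pos ⟨hδpos.le, min_le_left _ _⟩)
          (hsub_neg δ hδpos.le (min_le_right _ _)) (by simp [hH0]; exact ⟨ha0, hb0⟩)
        simpa [hH0] using this
      have ha' : a ≠ 0 := ne_of_lt hapos
      have hb' : b ≠ 0 := ne_of_gt hbpos
      field_simp at h1 h2 h3 ⊢
      have e3 : H (-δ) = -H δ := by linarith
      rw [e3] at h2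
      have h2' : H δ * a = δ * H a := by linarith
      have key : δ * (H a * b) = δ * (H b * a) := by
        calc δ * (H a * b) = (δ * H a) * b := by ring
          _ = (H δ * a) * b := by rw [h2']
          _ = (H δ * b) * a := by ring
          _ = (δ * H b) * a := by rw [h1]
          _ = δ * (H b * a) := by ring
      exact mul_left_cancel₀ (ne_of_gt hδpos) (by linarith [key])
    intro x hx
    have hxpos : 0 < x := lt_of_lt_of_le hlo hx.1
    set t : ℝ := Real.log (x / xstar) with ht_def
    have htmem : t ∈ Set.Icc a b := by
      constructor
      · exact Real.log_le_log (by positivity) (by gcongr; exact hx.1)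
      · exact Real.log_le_log (by positivity) (by gcongr; exact hx.2)
    have hxt : xstar * Real.exp t = x := by
      rw [ht_def, Real.exp_log (by positivity)]; field_simp
    have hHt : H t = t * (H b / b) := by
      rcases le_or_gt 0 t with h | h
      · rw [hpos hbpos t ⟨h, htmem.2⟩]; ring
      · rcases lt_or_ge a 0 with ha | ha
        · rw [hneg ha t htmem.1 h.le, ← hslope ha]; ring
        · have : a = 0 := le_antisymm ha0 ha
          linarith [htmem.1, this ▸ htmem.1]
    have : F x - F xstar = t * (H b / b) := by rw [← hxt]; exact hHt
    linarith
  · have hb0' : b = 0 := le_antisymm (not_lt.mp hbpos) hb0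
    by_cases hapos : a < 0
    · refine ⟨H a / a, ?_⟩
      intro x hx
      have hxpos : 0 < x := lt_of_lt_of_le hlo hx.1
      set t : ℝ := Real.log (x / xstar) with ht_def
      have htmem : t ∈ Set.Icc a b := by
        constructor
        · exact Real.log_le_log (by positivity) (by gcongr; exact hx.1)
        · exact Real.log_le_log (by positivity) (by gcongr; exact hx.2)
      have hxt : xstar * Real.exp t = x := by
        rw [ht_def, Real.exp_log (by positivity)]; field_simp
      have hHt : H t = t * (H a / a) := by
        rw [hneg hapos t htmem.1 (hb0' ▸ htmem.2)]; ring
      have : F x - F xstar = t * (H a / a) := by rw [← hxt]; exact hHt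
      linarith
    · refine ⟨0, ?_⟩
      intro x hx
      have ha0' : a = 0 := le_antisymm ha0 (not_lt.mp hapos)
      have hxlo : lo = xstar := by
        have := Real.exp_log (show (0:ℝ) < lo / xstar by positivity)
        rw [← ha_def, ha0', Real.exp_zero] at this
        field_simp at this
        linarith
      have hxhi' : hi = xstar := by
        have := Real.exp_log (show (0:ℝ) < hi / xstar by positivity)
        rw [← hb_def, hb0', Real.exp_zero] at this
        field_simp at this
        linarith
      have : x = xstar := le_antisymm (hxhi' ▸ hx.2) (hxlo ▸ hx.1)
      simp [this]
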